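/- Let A = {00, 01, 10, 11}, let π : A^∞ → C² be the interleaving bijection π(ε₁δ₁, ε₂δ₂, ε₃δ₃, …) = (ε₁ε₂ε₃⋯, δ₁δ₂δ₃⋯), and for finite binary strings α, β let μ_{α,β} : C² → C² be the map μ_{α,β}(ψ, ω) = (αψ, βω). Then the function μ_{α,β}^π = π⁻¹ ∘ μ_{α,β} ∘ π : A^∞ → A^∞ is a rational function. -/
import Mathlib


/-- The Cantor space of infinite binary sequences. -/
abbrev Cantor : Type := ℕ → Bool

/-- Concatenation of a finite binary string with an infinite binary sequence. -/
def cat (α : List Bool) (ω : Cantor) : Cantor := fun k =>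
  if h : k < α.length then α.get ⟨k, h⟩ else ω (k - α.length)

/-- An asynchronous transducer over the alphabet `A`: a finite set of states `S`, an
initial state, and a transition function giving, for each state and input letter, the
new state and the finite output word. -/
structure Transducer (A : Type) where
  /-- The set of states. -/
  S : Type
  /-- The set of states is finite. -/
  fin : Finite S
  /-- The initial state. -/
  init : S
  /-- The transition function. -/
  step : S → A → S × List A

/-- The state sequence of the transducer on the infinite input string `x`. -/
def Transducer.states {A : Type} (T : Transducer A) (x : ℕ → A) : ℕ → T.S
  | 0 => T.init
  | k + 1 => (T.step (T.states x k) (x k)).1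

/-- The finite output word produced at step `k` on input string `x`. -/
def Transducer.block {A : Type} (T : Transducer A) (x : ℕ → A) (k : ℕ) : List A :=
  (T.step (T.states x k) (x k)).2

/-- The concatenation of the output words produced during the first `k` steps:
a finite prefix of the output string. -/
def Transducer.outPrefix {A : Type} (T : Transducer A) (x : ℕ → A) (k : ℕ) : List A :=
  ((List.range k).map (T.block x)).flatten

/-- The transducer is nondegenerate: every infinite input string produces an infinite
output string. -/
def Transducer.Nondegenerate {A : Type} (T : Transducer A) : Prop :=
  ∀ (x : ℕ → A) (k : ℕ), ∃ m, k ≤ (T.outPrefix x m).length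

/-- `y` is the output string of the transducer on input string `x`: every finite prefix
of the produced output is a prefix of `y`. -/
def Transducer.IsOutput {A : Type} (T : Transducer A) (x y : ℕ → A) : Prop :=
  ∀ (k i : ℕ) (h : i < (T.outPrefix x k).length), y i = (T.outPrefix x k).get ⟨i, h⟩

/-- `f : A^∞ → A^∞` is a rational function: it is the input-output map of some
nondegenerate asynchronous transducer. -/
def IsRational {A : Type} (f : (ℕ → A) → (ℕ → A)) : Prop :=
  ∃ T : Transducer A, T.Nondegenerate ∧ ∀ x, T.IsOutput x (f x)

/-- The interleaving bijection `π` from infinite strings over the four-letter alphabet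
`A = {00, 01, 10, 11}` (pairs of binary digits) to `C²`:
`π(ε₁δ₁, ε₂δ₂, …) = (ε₁ε₂⋯, δ₁δ₂⋯)`. -/
def interleave : (ℕ → Bool × Bool) ≃ Cantor × Cantor where
  toFun x := (fun k => (x k).1, fun k => (x k).2)
  invFun p := fun k => (p.1 k, p.2 k)
  left_inv x := rfl
  right_inv p := rfl

/-- The prefix-prepending map `μ_{α,β}(ψ, ω) = (αψ, βω)` on `C²`. -/
def mu (α β : List Bool) (p : Cantor × Cantor) : Cantor × Cantor :=
  (cat α p.1, cat β p.2)

def Y (α β : List Bool) (x : ℕ → Bool × Bool) (i : ℕ) : Bool × Bool :=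
  ((cat α fun k => (x k).1) i, (cat β fun k => (x k).2) i)

def tr (α β : List Bool) : Transducer (Bool × Bool) where
  S := Fin (max α.length β.length + 2) × (Fin (max α.length β.length + 1) → Bool × Bool)
  fin := inferInstance
  init := (0, fun _ => (false, false))
  step := fun s l =>
    let a := α.length; let b := β.length; let m := min a b; let N := max a b
    let c := s.1; let buf := s.2
    let getx : ℕ → Bool × Bool := fun e =>
      if e = 0 then l else buf ⟨min (e - 1) N, by omega⟩
    let out : Bool × Bool :=
      (if h : c.val + m < a then α.get ⟨c.val + m, h⟩ else (getx (a - m)).1,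
       if h : c.val + m < b then β.get ⟨c.val + m, h⟩ else (getx (b - m)).2)
    ((⟨min (c.val + 1) (N + 1), by omega⟩,
      fun j => if h : j.val = 0 then l else buf ⟨j.val - 1, by omega⟩),
     if c.val = 0 then
       List.ofFn (fun i : Fin (m + 1) =>
         (if h : i.val < a then α.get ⟨i.val, h⟩ else l.1,
          if h : i.val < b then β.get ⟨i.val, h⟩ else l.2))
     else [out])

lemma states_spec (α β : List Bool) (x : ℕ → Bool × Bool) (k : ℕ) :
    ((tr α β).states x k).1.val = min k (max α.length β.length + 1) ∧
    ∀ j : Fin (max α.length β.length + 1), (j : ℕ) < k →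
      ((tr α β).states x k).2 j = x (k - 1 - j) := by
  induction k with
  | zero => exact ⟨rfl, fun j h => absurd h (by omega)⟩
  | succ k ih =>
    obtain ⟨ih1, ih2⟩ := ih
    constructor
    · show min (((tr α β).states x k).1.val + 1) (max α.length β.length + 1) = _
      rw [ih1]; omega
    · intro j hj
      show (if h : j.val = 0 then x k else ((tr α β).states x k).2 ⟨j.val - 1, by omega⟩) = _
      split
      · next h => rw [h]; simp
      · next h =>
        rw [ih2 ⟨j.val - 1, by omega⟩ (by simp; omega)]
        congr 1; simp; omega


lemma block_cases (α β : List Bool) (x : ℕ → Bool × Bool) (k : ℕ) :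
    (tr α β).block x k =
      if ((tr α β).states x k).1.val = 0 then
        List.ofFn (fun i : Fin (min α.length β.length + 1) =>
          (if h : i.val < α.length then α.get ⟨i.val, h⟩ else (x k).1,
           if h : i.val < β.length then β.get ⟨i.val, h⟩ else (x k).2))
      else
        [((if h : ((tr α β).states x k).1.val + min α.length β.length < α.length then
             α.get ⟨((tr α β).states x k).1.val + min α.length β.length, h⟩
           else (if α.length - min α.length β.length = 0 then x k
                 else ((tr α β).states x k).2
                   ⟨min (α.length - min α.length β.length - 1) (max α.length β.length),
                    by omega⟩).1),
          (if h : ((tr α β).states x k).1.val + min α.length β.length < β.length then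
             β.get ⟨((tr α β).states x k).1.val + min α.length β.length, h⟩
           else (if β.length - min α.length β.length = 0 then x k
                 else ((tr α β).states x k).2
                   ⟨min (β.length - min α.length β.length - 1) (max α.length β.length),
                    by omega⟩).2))] := rfl


lemma block_zero (α β : List Bool) (x : ℕ → Bool × Bool) :
    (tr α β).block x 0 = List.ofFn (fun i : Fin (min α.length β.length + 1) => Y α β x i) := by
  rw [block_cases, if_pos (by simp [tr, Transducer.states])]
  congr 1
  funext i
  have hi := i.isLt
  unfold Y cat
  refine Prod.ext ?_ ?_ <;> simp only
  · split
    · rfl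
    · next h =>
      have h0 : (i : ℕ) - α.length = 0 := by omega
      rw [h0]
  · split
    · rfl
    · next h =>
      have h0 : (i : ℕ) - β.length = 0 := by omega
      rw [h0]

lemma block_succ (α β : List Bool) (x : ℕ → Bool × Bool) (k : ℕ) (hk : 1 ≤ k) :
    (tr α β).block x k = [Y α β x (k + min α.length β.length)] := by
  obtain ⟨h1, h2⟩ := states_spec α β x k
  have h2' : ∀ (e : ℕ) (he : e < max α.length β.length + 1), e < k →
      ((tr α β).states x k).2 ⟨e, he⟩ = x (k - 1 - e) := fun e he hlt => h2 ⟨e, he⟩ hlt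
  have hcle : ((tr α β).states x k).1.val ≤ k := by omega
  rw [block_cases, if_neg (by omega)]
  congr 1
  unfold Y cat
  refine Prod.ext ?_ ?_ <;> simp only
  · split
    · next h =>
      have hck : ((tr α β).states x k).1.val = k := by omega
      rw [dif_pos (by omega : k + min α.length β.length < α.length)]
      simp only [hck]
    · next h =>
      rw [dif_neg (by omega : ¬ k + min α.length β.length < α.length)]
      split
      · next h0 =>
        have he : k + min α.length β.length - α.length = k := by omega
        rw [he]
      · next h0 =>
        rw [h2' _ _ (by omega)]
        have he : k - 1 - min (α.length - min α.length β.length - 1) (max α.length β.length)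
            = k + min α.length β.length - α.length := by omega
        rw [he]
  · split
    · next h =>
      have hck : ((tr α β).states x k).1.val = k := by omega
      rw [dif_pos (by omega : k + min α.length β.length < β.length)]
      simp only [hck]
    · next h =>
      rw [dif_neg (by omega : ¬ k + min α.length β.length < β.length)]
      split
      · next h0 =>
        have he : k + min α.length β.length - β.length = k := by omega
        rw [he]
      · next h0 =>
        rw [h2' _ _ (by omega)]
        have he : k - 1 - min (β.length - min α.length β.length - 1) (max α.length β.length)
            = k + min α.length β.length - β.length := by omega
        rw [he]

lemma outPrefix_succ (α β : List Bool) (x : ℕ → Bool × Bool) (k : ℕ) :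
    (tr α β).outPrefix x (k + 1) = (tr α β).outPrefix x k ++ (tr α β).block x k := by
  simp [Transducer.outPrefix, List.range_succ]

lemma outPrefix_len (α β : List Bool) (x : ℕ → Bool × Bool) (k : ℕ) :
    ((tr α β).outPrefix x (k + 1)).length = k + 1 + min α.length β.length := by
  induction k with
  | zero =>
    rw [outPrefix_succ, block_zero]
    simp [Transducer.outPrefix]
    omega
  | succ k ih =>
    rw [outPrefix_succ, block_succ α β x (k + 1) (by omega)]
    simp [ih]
    omega

lemma outPrefix_get (α β : List Bool) (x : ℕ → Bool × Bool) (k : ℕ) :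
    ∀ (i : ℕ) (h : i < ((tr α β).outPrefix x (k + 1)).length),
      ((tr α β).outPrefix x (k + 1)).get ⟨i, h⟩ = Y α β x i := by
  induction k with
  | zero =>
    intro i h
    simp only [List.get_eq_getElem]
    rw [List.getElem_of_eq
      (by rw [outPrefix_succ, block_zero,
              show (tr α β).outPrefix x 0 = [] from rfl, List.nil_append]) h,
      List.getElem_ofFn]
  | succ k ih =>
    intro i h
    have h' := h
    rw [outPrefix_len] at h'
    have hlen := outPrefix_len α β x k
    simp only [List.get_eq_getElem]
    rw [List.getElem_of_eq (outPrefix_succ α β x (k + 1)) h]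
    by_cases hi : i < ((tr α β).outPrefix x (k + 1)).length
    · rw [List.getElem_append_left hi]
      exact ih i hi
    · have hieq : i = k + 1 + min α.length β.length := by omega
      rw [List.getElem_append_right (by omega),
        List.getElem_of_eq (block_succ α β x (k + 1) (by omega))
          (by rw [block_succ α β x (k + 1) (by omega)]; simp; omega),
        List.getElem_singleton, hieq]

/-- For any finite binary strings `α` and `β`, the conjugate
`μ_{α,β}^π = π⁻¹ ∘ μ_{α,β} ∘ π` of the prefix-prepending map by the interleaving
bijection is a rational function on the infinite strings over `{00, 01, 10, 11}`. -/
theorem mu_pi_is_rational (α β : List Bool) :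
    IsRational (⇑interleave.symm ∘ mu α β ∘ ⇑interleave) := by
  refine ⟨tr α β, ?_, ?_⟩
  · intro x k
    exact ⟨k + 1, by rw [outPrefix_len]; omega⟩
  · intro x k i h
    match k with
    | 0 => simp [Transducer.outPrefix] at h
    | k + 1 =>
      show Y α β x i = _
      exact (outPrefix_get α β x k i h).symm
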